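/- arXiv:2308.11964 — 3 statements merged into one kernel-verified Lean document; each statement's English description precedes it below -/
import Mathlib

section
/- For every real ν ≥ e²/(2(e − 2)) and every real z with 0 < z ≤ 1, one has K_ν(z) < (ν/z)^ν. -/
open Real MeasureTheory

/-- Modified Bessel function of the second kind, via its integral representation. -/
noncomputable def besselK (ν z : ℝ) : ℝ :=
  ∫ t in Set.Ioi (0 : ℝ), Real.exp (-z * Real.cosh t) * Real.cosh (ν * t)

private lemma cosh_le_exp_self {x : ℝ} (hx : 0 ≤ x) : Real.cosh x ≤ Real.exp x := by
  rw [Real.cosh_eq]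
  have : Real.exp (-x) ≤ Real.exp x := Real.exp_le_exp.2 (by linarith)
  linarith

private lemma half_exp_le_cosh (x : ℝ) : Real.exp x / 2 ≤ Real.cosh x := by
  rw [Real.cosh_eq]
  have : 0 < Real.exp (-x) := Real.exp_pos _
  linarith

private lemma mul_self_le_exp (x : ℝ) : Real.exp 1 * x ≤ Real.exp x := by
  have h := Real.add_one_le_exp (x - 1)
  calc Real.exp 1 * x ≤ Real.exp 1 * Real.exp (x - 1) := by
        nlinarith [Real.exp_pos (1:ℝ)]
    _ = Real.exp x := by rw [← Real.exp_add]; ring_nf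

set_option maxHeartbeats 1000000 in
theorem besselK_lt_pow (ν z : ℝ)
    (hν : Real.exp 1 ^ 2 / (2 * (Real.exp 1 - 2)) ≤ ν)
    (hz : 0 < z) (hz' : z ≤ 1) :
    besselK ν z < (ν / z) ^ ν := by
  have he2 : (2:ℝ) < Real.exp 1 := by
    have := Real.exp_one_gt_d9; linarith
  have he3 : Real.exp 1 < 3 := by
    have := Real.exp_one_lt_d9; linarith
  have hν2 : (2:ℝ) < ν := by
    have h1 : (0:ℝ) < 2 * (Real.exp 1 - 2) := by linarith
    have h2 : 2 * (2 * (Real.exp 1 - 2)) < Real.exp 1 ^ 2 := by nlinarith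
    have := (lt_div_iff₀ h1).2 h2
    linarith
  have hν0 : (0:ℝ) < ν := by linarith
  have hνz : (1:ℝ) ≤ ν / z := by
    rw [le_div_iff₀ hz]; nlinarith
  have hνz0 : (0:ℝ) < ν / z := by linarith
  set T := Real.log (ν / z) with hT
  have hT0 : 0 ≤ T := Real.log_nonneg hνz
  have hexpT : Real.exp T = ν / z := Real.exp_log hνz0
  have hzT : z * Real.exp T = ν := by
    rw [hexpT]; field_simp
  set c := ν * (Real.exp 1 - 2) / 2 with hc
  have hc0 : 0 < c := by
    have : 0 < Real.exp 1 - 2 := by linarith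
    positivity
  set f : ℝ → ℝ := fun t => Real.exp (-z * Real.cosh t) * Real.cosh (ν * t) with hf
  have hfcont : Continuous f := by fun_prop
  have hfnn : ∀ t, 0 ≤ f t := fun t =>
    mul_nonneg (Real.exp_pos _).le (Real.cosh_pos _).le
  -- bound on (0, T]
  have hbound1 : ∀ t ∈ Set.Ioc (0:ℝ) T, f t ≤ Real.exp (ν * t) := by
    intro t ht
    have ht0 : 0 ≤ t := ht.1.le
    have h1 : Real.exp (-z * Real.cosh t) ≤ 1 := by
      rw [Real.exp_le_one_iff]
      have : 0 < Real.cosh t := Real.cosh_pos t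
      nlinarith
    have h2 : Real.cosh (ν * t) ≤ Real.exp (ν * t) :=
      cosh_le_exp_self (by positivity)
    calc f t ≤ 1 * Real.exp (ν * t) :=
          mul_le_mul h1 h2 (Real.cosh_pos _).le one_pos.le
      _ = Real.exp (ν * t) := one_mul _
  -- bound on (T, ∞)
  set A : ℝ := Real.exp (ν * T + c * T) with hA
  have hbound2 : ∀ t ∈ Set.Ioi T, f t ≤ A * Real.exp (-(c * t)) := by
    intro t ht
    have htT : T ≤ t := le_of_lt ht
    have ht0 : 0 ≤ t := le_trans hT0 htT
    have h2 : Real.cosh (ν * t) ≤ Real.exp (ν * t) :=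
      cosh_le_exp_self (by positivity)
    have h1 : Real.exp (-z * Real.cosh t) ≤ Real.exp (-(z / 2 * Real.exp t)) := by
      apply Real.exp_le_exp.2
      have := half_exp_le_cosh t
      nlinarith
    have hkey : ν * t + -(z / 2 * Real.exp t) ≤ ν * T + c * T + -(c * t) := by
      have hsplit : Real.exp t = Real.exp T * Real.exp (t - T) := by
        rw [← Real.exp_add]; ring_nf
      have hes : Real.exp 1 * (t - T) ≤ Real.exp (t - T) := mul_self_le_exp _
      have hzexp : z / 2 * Real.exp t = ν / 2 * Real.exp (t - T) := by
        rw [hsplit, ← mul_assoc]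
        have : z / 2 * Real.exp T = ν / 2 := by
          rw [div_mul_eq_mul_div, hzT]
        rw [this]
      rw [hzexp, hc]
      nlinarith
    calc f t ≤ Real.exp (-(z / 2 * Real.exp t)) * Real.exp (ν * t) :=
          mul_le_mul h1 h2 (Real.cosh_pos _).le (Real.exp_pos _).le
      _ = Real.exp (ν * t + -(z / 2 * Real.exp t)) := by
          rw [← Real.exp_add]; ring_nf
      _ ≤ Real.exp (ν * T + c * T + -(c * t)) := Real.exp_le_exp.2 hkey
      _ = A * Real.exp (-(c * t)) := by rw [hA, ← Real.exp_add]
  -- integrability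
  have hint1 : IntegrableOn f (Set.Ioc 0 T) := hfcont.integrableOn_Ioc
  have hgint : IntegrableOn (fun t => A * Real.exp (-(c * t))) (Set.Ioi T) := by
    have := (exp_neg_integrableOn_Ioi T hc0).const_mul A
    simpa [IntegrableOn] using this
  have hint2 : IntegrableOn f (Set.Ioi T) := by
    apply Integrable.mono' hgint (hfcont.aestronglyMeasurable.restrict)
    filter_upwards [ae_restrict_mem measurableSet_Ioi] with t ht
    rw [Real.norm_eq_abs, abs_of_nonneg (hfnn t)]
    exact hbound2 t ht
  -- split the integral
  have hsplit : besselK ν z =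
      (∫ t in Set.Ioc (0:ℝ) T, f t) + ∫ t in Set.Ioi T, f t := by
    rw [besselK, ← Set.Ioc_union_Ioi_eq_Ioi hT0]
    exact setIntegral_union (Set.Ioc_disjoint_Ioi le_rfl) measurableSet_Ioi hint1 hint2
  -- value of the first comparison integral
  have hI1 : (∫ t in Set.Ioc (0:ℝ) T, Real.exp (ν * t)) =
      (Real.exp (ν * T) - 1) / ν := by
    rw [← intervalIntegral.integral_of_le hT0,
      intervalIntegral.integral_comp_mul_left (fun x => Real.exp x) hν0.ne']
    rw [integral_exp, mul_zero, Real.exp_zero, smul_eq_mul, div_eq_inv_mul]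
  -- value of the second comparison integral
  have hI2 : (∫ t in Set.Ioi T, A * Real.exp (-(c * t))) = Real.exp (ν * T) / c := by
    rw [MeasureTheory.integral_const_mul]
    have : (∫ t in Set.Ioi T, Real.exp (-(c * t))) = c⁻¹ * Real.exp (-(c * T)) := by
      have h := integral_comp_mul_left_Ioi (fun x => Real.exp (-x)) T hc0
      simpa [smul_eq_mul, integral_exp_neg_Ioi, integral_exp_Iic] using h
    rw [this]
    have h3 : Real.exp (ν * T + c * T) * (c⁻¹ * Real.exp (-(c * T)))
        = c⁻¹ * Real.exp (ν * T) := by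
      rw [mul_comm (Real.exp _) _, mul_assoc, ← Real.exp_add]
      congr 2
      ring
    rw [hA, h3, inv_mul_eq_div]
  have hle1 : (∫ t in Set.Ioc (0:ℝ) T, f t) ≤ (Real.exp (ν * T) - 1) / ν := by
    rw [← hI1]
    apply setIntegral_mono_on hint1 _ measurableSet_Ioc hbound1
    exact (Real.continuous_exp.comp (continuous_const.mul continuous_id)).integrableOn_Ioc
  have hle2 : (∫ t in Set.Ioi T, f t) ≤ Real.exp (ν * T) / c := by
    rw [← hI2]
    exact setIntegral_mono_on hint2 hgint measurableSet_Ioi hbound2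
  -- final arithmetic
  have hrw : (ν / z) ^ ν = Real.exp (ν * T) := by
    rw [Real.rpow_def_of_pos hνz0, mul_comm]
  rw [hsplit, hrw]
  set E := Real.exp (ν * T) with hE
  have hE1 : 1 ≤ E := by
    rw [hE, ← Real.exp_zero]
    exact Real.exp_le_exp.2 (by positivity)
  have hsum : 1 / ν + 1 / c ≤ 2 / Real.exp 1 := by
    have hνe : Real.exp 1 ^ 2 ≤ ν * (2 * (Real.exp 1 - 2)) :=
      (div_le_iff₀ (by linarith)).1 hν
    have h1 : 1 / ν ≤ 2 * (Real.exp 1 - 2) / Real.exp 1 ^ 2 := by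
      rw [div_le_div_iff₀ hν0 (by positivity)]
      nlinarith
    have h2 : 1 / c ≤ 4 / Real.exp 1 ^ 2 := by
      rw [div_le_div_iff₀ hc0 (by positivity), hc]
      nlinarith
    have h3 : 2 * (Real.exp 1 - 2) / Real.exp 1 ^ 2 + 4 / Real.exp 1 ^ 2
        ≤ 2 / Real.exp 1 := by
      rw [← add_div, div_le_div_iff₀ (by positivity) (by positivity)]
      nlinarith
    linarith
  have h2e : 2 / Real.exp 1 < 1 := by
    rw [div_lt_one (by positivity)]; linarith
  have hν1 : 0 < 1 / ν := by positivity
  calc (∫ t in Set.Ioc (0:ℝ) T, f t) + ∫ t in Set.Ioi T, f t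
      ≤ (E - 1) / ν + E / c := add_le_add hle1 hle2
    _ = E * (1 / ν + 1 / c) - 1 / ν := by field_simp; ring
    _ < E * (1 / ν + 1 / c) := by linarith
    _ ≤ E * (2 / Real.exp 1) := by nlinarith [hsum, hE1]
    _ < E := by nlinarith [h2e, hE1]
end

section
/- For every real ν ≥ 1, the quantity c₀ := 2·(Γ(ν)/√π)^{2/(2ν−1)} satisfies (2ν/e)·(2/e)^{1/(2ν−1)} < c₀ < 2ν/e, where Γ denotes the real Gamma function. -/
open Real MeasureTheory

section Aux
open Set Filter Topology Stirling

lemma log_low {t : ℝ} (h0 : 0 < t) (h1 : t < 1) :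
    2 * t < Real.log (1 + t) - Real.log (1 - t) := by
  set f : ℝ → ℝ := fun u => Real.log (1 + u) - Real.log (1 - u) - 2 * u with hf
  have key : StrictMonoOn f (Ico (0:ℝ) 1) := by
    apply strictMonoOn_of_deriv_pos (convex_Ico 0 1)
    · apply ContinuousOn.sub (ContinuousOn.sub ?_ ?_) (continuous_const.mul continuous_id).continuousOn
      · exact (continuousOn_const.add continuousOn_id).log (fun x hx => by
          show (1:ℝ) + x ≠ 0; have := hx.1; intro h; linarith)
      · exact (continuousOn_const.sub continuousOn_id).log (fun x hx => by
          show (1:ℝ) - x ≠ 0; have := hx.2; intro h; linarith)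
    · intro x hx
      rw [interior_Ico] at hx
      obtain ⟨hx0, hx1⟩ := hx
      have h1x : (1:ℝ) + x ≠ 0 := by nlinarith
      have h2x : (1:ℝ) - x ≠ 0 := by nlinarith
      have d1 : HasDerivAt (fun u : ℝ => Real.log (1 + u)) (1 + x)⁻¹ x := by
        simpa using ((hasDerivAt_id x).const_add 1).log h1x
      have d2 : HasDerivAt (fun u : ℝ => Real.log (1 - u)) (-(1 - x)⁻¹) x := by
        have := ((hasDerivAt_id x).const_sub 1).log h2x
        simpa [neg_div, div_eq_inv_mul] using this
      have d : HasDerivAt f ((1 + x)⁻¹ + (1 - x)⁻¹ - 2) x := by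
        have := ((d1.sub d2).sub ((hasDerivAt_id x).const_mul 2))
        exact this.congr_deriv (by ring)
      rw [d.deriv]
      have : (1:ℝ) + x > 0 := by linarith
      have : (1:ℝ) - x > 0 := by linarith
      have e1 : (1 + x)⁻¹ = 1/(1+x) := by ring
      have e2 : (1 - x)⁻¹ = 1/(1-x) := by ring
      rw [e1, e2, div_add_div _ _ (by positivity) (by positivity)]
      rw [div_sub' (by positivity)]
      apply div_pos (by nlinarith) (by nlinarith)
  have h0' : (0:ℝ) ∈ Ico (0:ℝ) 1 := by constructor <;> norm_num
  have ht' : t ∈ Ico (0:ℝ) 1 := ⟨le_of_lt h0, h1⟩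
  have := key h0' ht' h0
  simp only [hf] at this
  simp at this
  linarith

lemma log_up {x : ℝ} (hx : 1 ≤ x) : Real.log x ≤ (x - x⁻¹) / 2 := by
  set f : ℝ → ℝ := fun u => (u - u⁻¹) / 2 - Real.log u with hf
  have key : MonotoneOn f (Ici (1:ℝ)) := by
    apply monotoneOn_of_deriv_nonneg (convex_Ici 1)
    · apply ContinuousOn.sub
      · exact ((continuousOn_id.sub (continuousOn_inv₀.mono (fun y hy => by
          simp only [mem_compl_iff, mem_singleton_iff]; intro h; rw [h] at hy; exact absurd hy (by norm_num)))).div_const 2)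
      · exact Real.continuousOn_log.mono (fun y hy => by
          simp only [mem_compl_iff, mem_singleton_iff]; intro h; rw [h] at hy; exact absurd hy (by norm_num))
    · intro y hy
      rw [interior_Ici] at hy
      have hy0 : y ≠ 0 := by have : (1:ℝ) < y := hy; linarith
      exact (((differentiable_id.differentiableAt.sub ((differentiableAt_inv hy0))).div_const 2).sub
        ((Real.differentiableAt_log hy0))).differentiableWithinAt
    · intro y hy
      rw [interior_Ici] at hy
      have hy1 : (1:ℝ) < y := hy
      have hy0 : y ≠ 0 := by linarith
      have d : HasDerivAt f ((1 + y⁻¹^2)/2 - y⁻¹) y := by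
        have d1 : HasDerivAt (fun u : ℝ => (u - u⁻¹)/2) ((1 - (-(y^2)⁻¹)) / 2) y :=
          ((hasDerivAt_id y).sub (hasDerivAt_inv hy0)).div_const 2
        have d2 : HasDerivAt Real.log y⁻¹ y := Real.hasDerivAt_log hy0
        have := d1.sub d2
        exact this.congr_deriv (by ring)
      rw [d.deriv]
      have : y⁻¹ = 1/y := by ring
      rw [this]
      rw [sub_nonneg, div_le_div_iff₀ (by positivity) (by norm_num)]
      have h2 : (0:ℝ) < y^2 := by positivity
      have hyy : (0:ℝ) < y := by linarith
      have h4 : y * (1/y) = 1 := by field_simp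
      have h5 : (1/y)^2 * y = 1/y := by field_simp
      nlinarith [sq_nonneg (y - 1), h4, h5, hyy]
  have h1 : (1:ℝ) ∈ Ici (1:ℝ) := by norm_num
  have := key h1 hx hx
  simp only [hf] at this
  norm_num at this
  linarith


lemma step_ineq {x : ℝ} (hx : 0 < x) : 1 < (x + 1/2) * (Real.log (x+1) - Real.log x) := by
  set t : ℝ := 1/(2*x+1) with ht
  have h0 : 0 < t := by positivity
  have h1 : t < 1 := by rw [ht]; rw [div_lt_one (by linarith)]; linarith
  have key := log_low h0 h1
  have e1 : 1 + t = (2*x+2)/(2*x+1) := by rw [ht]; field_simp; ring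
  have e2 : 1 - t = (2*x)/(2*x+1) := by rw [ht]; field_simp; ring
  rw [e1, e2, Real.log_div (by positivity) (by positivity), Real.log_div (by positivity) (by positivity)] at key
  have e3 : Real.log (2*x+2) = Real.log 2 + Real.log (x+1) := by
    rw [← Real.log_mul (by norm_num) (by positivity)]; ring_nf
  have e4 : Real.log (2*x) = Real.log 2 + Real.log x := by
    rw [← Real.log_mul (by norm_num) (by positivity)]
  rw [e3, e4] at key
  have : 2 * t * (x + 1/2) = 1 := by rw [ht]; field_simp
  nlinarith [key, h0, hx]

-- helper: log of rational ≥ 2t where (1+t)/(1-t)=q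
lemma log_rat_lb (t : ℝ) (h0 : 0 < t) (h1 : t < 1) : 2*t < Real.log ((1+t)/(1-t)) := by
  rw [Real.log_div (by linarith) (by linarith)]
  exact log_low h0 h1

lemma log_three_halves_lb : (2/5 : ℝ) < Real.log (3/2) := by
  have := log_rat_lb (1/5) (by norm_num) (by norm_num)
  norm_num at this
  convert this using 2 <;> norm_num

lemma log_three_halves_ub : Real.log (3/2) ≤ (5/12 : ℝ) := by
  have := log_up (x := 3/2) (by norm_num)
  norm_num at this
  linarith

lemma log_pi_lb : (1.137 : ℝ) < Real.log π := by
  have h1 : Real.log (25/8 : ℝ) < Real.log π := by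
    apply Real.log_lt_log (by norm_num)
    nlinarith [Real.pi_gt_d6]
  have h2 : Real.log (25/8 : ℝ) = Real.log 2 + (Real.log (5/4) + Real.log (5/4)) := by
    rw [← Real.log_mul (by norm_num) (by norm_num), ← Real.log_mul (by norm_num) (by norm_num)]
    norm_num
  have h3 : (2/9:ℝ) < Real.log (5/4) := by
    have := log_rat_lb (1/9) (by norm_num) (by norm_num)
    norm_num at this
    convert this using 2 <;> norm_num
  have h4 := Real.log_two_gt_d9
  rw [h2] at h1
  nlinarith
lemma log_pi_ub : Real.log π < (1.1494 : ℝ) := by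
  have h1 : Real.log π < Real.log (22/7 : ℝ) := by
    apply Real.log_lt_log Real.pi_pos
    nlinarith [Real.pi_lt_d6]
  have h2 : Real.log (22/7 : ℝ) = Real.log 2 + (Real.log (11/9) + Real.log (9/7)) := by
    rw [← Real.log_mul (by norm_num) (by norm_num), ← Real.log_mul (by norm_num) (by norm_num)]
    norm_num
  have h3 := log_up (x := 11/9) (by norm_num)
  have h4 := log_up (x := 9/7) (by norm_num)
  have h5 := Real.log_two_lt_d9
  norm_num at h3 h4
  nlinarith

lemma log_three_lb : (1.093 : ℝ) < Real.log 3 := by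
  have h2 : Real.log (3:ℝ) = Real.log 2 + Real.log (3/2) := by
    rw [← Real.log_mul (by norm_num) (by norm_num)]; norm_num
  have := log_rat_lb (1/5) (by norm_num) (by norm_num)
  norm_num at this
  have h3 : (2/5:ℝ) < Real.log (3/2) := by convert this using 2 <;> norm_num
  have h4 := Real.log_two_gt_d9
  nlinarith

noncomputable def gg (x : ℝ) : ℝ := Real.log (Real.Gamma x) - (x - 1/2) * Real.log x + x

lemma gg_step {x : ℝ} (hx : 0 < x) : gg (x + 1) < gg x := by
  unfold gg
  rw [Real.Gamma_add_one (ne_of_gt hx), Real.log_mul (ne_of_gt hx) (ne_of_gt (Real.Gamma_pos_of_pos hx))]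
  have := step_ineq hx
  nlinarith [this]

lemma gg_chain {x : ℝ} (hx : 0 < x) (n : ℕ) : gg (x + n) ≤ gg x := by
  induction n with
  | zero => simp
  | succ m ih =>
    have h1 : x + ((m:ℝ) + 1) = (x + m) + 1 := by ring
    push_cast
    rw [h1]
    have := gg_step (x := x + m) (by positivity)
    linarith

lemma log_Gamma_three_halves : Real.log (Real.Gamma (3/2)) = Real.log π / 2 - Real.log 2 := by
  have h : Real.Gamma (3/2 : ℝ) = Real.sqrt π / 2 := by
    have := Real.Gamma_add_one (s := 1/2) (by norm_num)
    rw [show (1/2 : ℝ) + 1 = 3/2 by norm_num, Real.Gamma_one_half_eq] at this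
    rw [this]; ring
  rw [h, Real.log_div (by positivity) (by norm_num), Real.log_sqrt Real.pi_pos.le]

lemma gg_upper_12 {x : ℝ} (h1 : 1 ≤ x) (h2 : x ≤ 2) : gg x < (1 + Real.log π) / 2 := by
  have hcv := Real.convexOn_log_Gamma
  have hL : Real.log π / 2 - Real.log 2 ≤ -(0.118) := by
    have := Real.log_two_gt_d9; have := log_pi_ub; norm_num at *; linarith
  have hpi := log_pi_lb
  rcases le_total x (3/2) with hx32 | hx32
  · set t : ℝ := 2 * (x - 1) with htdef
    have ht0 : 0 ≤ t := by simp [htdef]; linarith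
    have ht1 : t ≤ 1 := by simp [htdef]; linarith
    have hxt : x = (1 - t) * 1 + t * (3/2) := by simp [htdef]; ring
    have chord : Real.log (Real.Gamma x) ≤ t * (Real.log π / 2 - Real.log 2) := by
      have := hcv.2 (mem_Ioi.mpr one_pos) (mem_Ioi.mpr (by norm_num : (0:ℝ) < 3/2))
        (by linarith : (0:ℝ) ≤ 1 - t) ht0 (by ring)
      simp only [smul_eq_mul, Function.comp_apply] at this
      rw [← hxt] at this
      rw [Real.Gamma_one, Real.log_one, log_Gamma_three_halves] at this
      linarith [this]
    have logchord : t * (2/5) ≤ Real.log x := by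
      have hcc := (strictConcaveOn_log_Ioi.concaveOn).2 (mem_Ioi.mpr one_pos)
        (mem_Ioi.mpr (by norm_num : (0:ℝ) < 3/2)) (by linarith : (0:ℝ) ≤ 1 - t) ht0 (by ring)
      simp only [smul_eq_mul, Function.comp_apply] at hcc
      rw [← hxt, Real.log_one] at hcc
      nlinarith [log_three_halves_lb, ht0]
    have hxpos : (0:ℝ) < x - 1/2 := by linarith
    have step3 : (x - 1/2) * (t * (2/5)) ≤ (x - 1/2) * Real.log x :=
      mul_le_mul_of_nonneg_left logchord (le_of_lt hxpos)
    have step4 : t * (Real.log π / 2 - Real.log 2) ≤ t * (-(0.118)) :=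
      mul_le_mul_of_nonneg_left hL ht0
    have hx' : x = 1 + t/2 := by simp [htdef]
    unfold gg
    nlinarith [sq_nonneg (t - 0.455), chord, step3, step4, hpi]
  · set t : ℝ := 2 * (x - 3/2) with htdef
    have ht0 : 0 ≤ t := by simp [htdef]; linarith
    have ht1 : t ≤ 1 := by simp [htdef]; linarith
    have hxt : x = (1 - t) * (3/2) + t * 2 := by simp [htdef]; ring
    have chord : Real.log (Real.Gamma x) ≤ (1-t) * (Real.log π / 2 - Real.log 2) := by
      have := hcv.2 (mem_Ioi.mpr (by norm_num : (0:ℝ) < 3/2)) (mem_Ioi.mpr (by norm_num : (0:ℝ) < 2))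
        (by linarith : (0:ℝ) ≤ 1 - t) ht0 (by ring)
      simp only [smul_eq_mul, Function.comp_apply] at this
      rw [← hxt] at this
      rw [Real.Gamma_two, Real.log_one, log_Gamma_three_halves] at this
      linarith [this]
    have logchord : (1-t) * (2/5) + t * 0.6931471803 ≤ Real.log x := by
      have hcc := (strictConcaveOn_log_Ioi.concaveOn).2 (mem_Ioi.mpr (by norm_num : (0:ℝ) < 3/2))
        (mem_Ioi.mpr (by norm_num : (0:ℝ) < 2)) (by linarith : (0:ℝ) ≤ 1 - t) ht0 (by ring)
      simp only [smul_eq_mul, Function.comp_apply] at hcc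
      rw [← hxt] at hcc
      nlinarith [log_three_halves_lb, Real.log_two_gt_d9, ht0, ht1]
    have hxpos : (0:ℝ) < x - 1/2 := by linarith
    have step3 : (x - 1/2) * ((1-t) * (2/5) + t * 0.6931471803) ≤ (x - 1/2) * Real.log x :=
      mul_le_mul_of_nonneg_left logchord (le_of_lt hxpos)
    have step4 : (1-t) * (Real.log π / 2 - Real.log 2) ≤ (1-t) * (-(0.118)) :=
      mul_le_mul_of_nonneg_left hL (by linarith)
    have hx' : x = 3/2 + t/2 := by simp [htdef]
    unfold gg
    nlinarith [sq_nonneg (t - 0.43), chord, step3, step4, hpi]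

lemma secant_lb {n : ℕ} (hn : 2 ≤ n) {x : ℝ} (hx : (n:ℝ) < x) :
    Real.log (Real.Gamma n) + (x - n) * Real.log ((n:ℝ)-1) ≤ Real.log (Real.Gamma x) := by
  have hcv := Real.convexOn_log_Gamma
  have hn1 : (1:ℝ) ≤ (n:ℝ) - 1 := by
    have : (2:ℝ) ≤ (n:ℝ) := by exact_mod_cast hn
    linarith
  have hmem1 : ((n:ℝ) - 1) ∈ Ioi (0:ℝ) := by simp; linarith
  have hmem2 : (n:ℝ) ∈ Ioi (0:ℝ) := by simp; linarith
  have hmem3 : x ∈ Ioi (0:ℝ) := by simp; linarith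
  have hsec := hcv.secant_mono hmem2 hmem1 hmem3
    (by intro h; linarith [sub_eq_zero.mp (by linarith [h] : ((n:ℝ)-1) - n = 0)])
    (ne_of_gt hx) (by linarith)
  simp only [Function.comp_apply] at hsec
  have hgam : Real.Gamma (n:ℝ) = ((n:ℝ)-1) * Real.Gamma ((n:ℝ)-1) := by
    have := Real.Gamma_add_one (s := (n:ℝ)-1) (by linarith)
    rw [show ((n:ℝ)-1) + 1 = (n:ℝ) by ring] at this
    exact this
  have hGpos : 0 < Real.Gamma ((n:ℝ)-1) := Real.Gamma_pos_of_pos (by linarith)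
  have hlogn : Real.log (Real.Gamma ((n:ℝ)-1)) - Real.log (Real.Gamma (n:ℝ))
      = - Real.log ((n:ℝ)-1) := by
    rw [hgam, Real.log_mul (by linarith) (ne_of_gt hGpos)]; ring
  rw [show ((n:ℝ)-1) - (n:ℝ) = -1 by ring] at hsec
  have h1 : (Real.log (Real.Gamma ((n:ℝ)-1)) - Real.log (Real.Gamma (n:ℝ))) / (-1)
      = Real.log ((n:ℝ)-1) := by rw [hlogn]; ring
  rw [h1] at hsec
  have hxn : 0 < x - n := by linarith
  rw [le_div_iff₀ hxn] at hsec
  linarith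

lemma B_tendsto (c : ℝ) (hc : 0 < c) :
    Tendsto (fun n : ℕ => Real.log (Real.Gamma n) + c * Real.log ((n:ℝ)-1)
      - (c + n - 1/2) * Real.log (c + n) + (c + n)) atTop
      (𝓝 ((Real.log 2 + Real.log π)/2)) := by
  have hueq : ∀ᶠ n : ℕ in atTop,
      Real.log (Real.Gamma n) + c * Real.log ((n:ℝ)-1)
        - (c + n - 1/2) * Real.log (c + n) + (c + n)
      = Real.log (Stirling.stirlingSeq (n-1)) + (1/2) * Real.log 2 + 1 + c
        - (((n:ℝ)-1) + (c+1/2)) * Real.log (1 + (c+1)/((n:ℝ)-1)) := by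
    filter_upwards [eventually_ge_atTop 2] with n hn
    set u : ℝ := (n:ℝ) - 1 with hu
    have hu1 : (1:ℝ) ≤ u := by
      have : (2:ℝ) ≤ (n:ℝ) := by exact_mod_cast hn
      simp [hu]; linarith
    have hu0 : (0:ℝ) < u := by linarith
    -- Gamma n = (n-1)!
    have hgam : Real.Gamma (n:ℝ) = (Nat.factorial (n-1) : ℝ) := by
      have := Real.Gamma_nat_eq_factorial (n-1)
      rw [show (((n-1):ℕ):ℝ) + 1 = (n:ℝ) by
        have : 1 ≤ n := by omega
        push_cast [Nat.cast_sub this]; ring] at this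
      exact this
    -- stirlingSeq
    have hden : (0:ℝ) < Real.sqrt (2 * u) * (u / Real.exp 1) ^ (n-1) := by positivity
    have hs : Real.log ((Nat.factorial (n-1) : ℝ)) = Real.log (Stirling.stirlingSeq (n-1))
        + (1/2) * (Real.log 2 + Real.log u) + ((n:ℝ)-1) * (Real.log u - 1) := by
      have hfac : (Nat.factorial (n-1) : ℝ) = Stirling.stirlingSeq (n-1) * (Real.sqrt (2 * u) * (u / Real.exp 1) ^ (n-1)) := by
        rw [Stirling.stirlingSeq]
        rw [show ((↑(n-1) : ℝ)) = u by
          have : 1 ≤ n := by omega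
          push_cast [Nat.cast_sub this]; simp [hu]]
        field_simp
      have hspos : 0 < Stirling.stirlingSeq (n-1) := by
        have h2 : n - 2 + 1 = n - 1 := by omega
        have := Stirling.stirlingSeq'_pos (n-2)
        rwa [h2] at this
      rw [hfac, Real.log_mul (ne_of_gt hspos) (ne_of_gt hden),
        Real.log_mul (by positivity) (by positivity),
        Real.log_sqrt (by positivity), Real.log_mul (by norm_num) (ne_of_gt hu0),
        Real.log_pow, Real.log_div (ne_of_gt hu0) (Real.exp_pos 1).ne', Real.log_exp]
      have : ((n - 1 : ℕ) : ℝ) = (n:ℝ) - 1 := by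
        have : 1 ≤ n := by omega
        push_cast [Nat.cast_sub this]; ring
      rw [this]
      ring
    have hcn : Real.log (c + n) = Real.log u + Real.log (1 + (c+1)/u) := by
      rw [← Real.log_mul (ne_of_gt hu0) (by positivity)]
      congr 1
      field_simp
      ring
    rw [hgam, hs, hcn]
    ring
  rw [tendsto_congr' hueq]
  -- now the limit of the closed form
  have hU : Tendsto (fun n : ℕ => (n:ℝ) - 1) atTop atTop :=
    tendsto_atTop_add_const_right _ (-1) tendsto_natCast_atTop_atTop
  have hlim1 : Tendsto (fun n : ℕ => Real.log (Stirling.stirlingSeq (n-1))) atTop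
      (𝓝 (Real.log (Real.sqrt π))) := by
    have hcont : ContinuousAt Real.log (Real.sqrt π) :=
      Real.continuousAt_log (by positivity)
    have hsub : Tendsto (fun n : ℕ => n - 1) atTop atTop := by
      apply tendsto_atTop_atTop.mpr
      intro b
      exact ⟨b + 1, fun a ha => by omega⟩
    exact (hcont.tendsto.comp Stirling.tendsto_stirlingSeq_sqrt_pi).comp hsub
  have hlim2 : Tendsto (fun n : ℕ => (((n:ℝ)-1) + (c+1/2)) * Real.log (1 + (c+1)/((n:ℝ)-1)))
      atTop (𝓝 (c+1)) := by
    have base : Tendsto (fun u : ℝ => (1 + (c+1/2)/u) * (u * Real.log (1 + (c+1)/u)))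
        atTop (𝓝 (1 * (c+1))) := by
      apply Tendsto.mul
      · have : Tendsto (fun u : ℝ => (c+1/2)/u) atTop (𝓝 0) :=
          tendsto_const_nhds.div_atTop tendsto_id
        simpa using tendsto_const_nhds.add this
      · exact Real.tendsto_mul_log_one_add_div_atTop (c+1)
    have comp := base.comp hU
    have : ∀ᶠ n : ℕ in atTop,
        ((1 + (c+1/2)/((n:ℝ)-1)) * (((n:ℝ)-1) * Real.log (1 + (c+1)/((n:ℝ)-1))))
        = (((n:ℝ)-1) + (c+1/2)) * Real.log (1 + (c+1)/((n:ℝ)-1)) := by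
      filter_upwards [eventually_ge_atTop 2] with n hn
      have : (2:ℝ) ≤ (n:ℝ) := by exact_mod_cast hn
      have hu0 : (0:ℝ) < (n:ℝ) - 1 := by linarith
      field_simp
    rw [one_mul] at comp
    exact comp.congr' this
  have key := ((hlim1.add (tendsto_const_nhds (x := 1/2 * Real.log 2 + 1 + c))).sub hlim2)
  have hval : Real.log (Real.sqrt π) + (1/2 * Real.log 2 + 1 + c) - (c+1)
      = (Real.log 2 + Real.log π)/2 := by
    rw [Real.log_sqrt Real.pi_pos.le]; ring
  rw [hval] at key
  apply key.congr
  intro n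
  ring

lemma gg_upper {ν : ℝ} (hν : 1 ≤ ν) : gg ν < (1 + Real.log π) / 2 := by
  have hk1 : 1 ≤ ⌊ν⌋ := Int.le_floor.mpr (by exact_mod_cast hν)
  set n : ℕ := (⌊ν⌋ - 1).toNat with hndef
  have hn : (n:ℝ) = (⌊ν⌋:ℝ) - 1 := by
    have h : ((⌊ν⌋ - 1).toNat : ℤ) = ⌊ν⌋ - 1 := Int.toNat_of_nonneg (by omega)
    rw [hndef]
    exact_mod_cast congrArg (fun z : ℤ => (z:ℝ)) h
  have hfl := Int.floor_le ν
  have hfu := Int.lt_floor_add_one ν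
  set y := ν - n with hy
  have hy1 : 1 ≤ y := by rw [hy, hn]; push_cast at *; linarith
  have hy2 : y ≤ 2 := by rw [hy, hn]; push_cast at *; linarith
  have hchain := gg_chain (x := y) (by linarith) n
  have : y + n = ν := by rw [hy]; ring
  rw [this] at hchain
  exact lt_of_le_of_lt hchain (gg_upper_12 hy1 hy2)

lemma gg_lower {ν : ℝ} (hν : 1 ≤ ν) : (Real.log 2 + Real.log π) / 2 < gg ν := by
  have hν0 : (0:ℝ) < ν := by linarith
  have hstep := gg_step hν0
  have hc0 : (0:ℝ) < ν + 1 := by linarith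
  have hB : ∀ᶠ m : ℕ in atTop,
      Real.log (Real.Gamma m) + (ν+1) * Real.log ((m:ℝ)-1)
        - ((ν+1) + m - 1/2) * Real.log ((ν+1) + m) + ((ν+1) + m) ≤ gg (ν + 1) := by
    filter_upwards [eventually_ge_atTop 2] with m hm
    have hsec := secant_lb hm (x := (ν+1) + m) (by linarith)
    have he : ((ν+1) + (m:ℝ)) - m = ν + 1 := by ring
    rw [he] at hsec
    have hchain := gg_chain (x := ν + 1) (by linarith) m
    have hgg : gg ((ν+1) + (m:ℝ)) = Real.log (Real.Gamma ((ν+1) + m))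
        - ((ν+1) + m - 1/2) * Real.log ((ν+1) + m) + ((ν+1) + m) := rfl
    have : Real.log (Real.Gamma m) + (ν+1) * Real.log ((m:ℝ)-1)
        - ((ν+1) + m - 1/2) * Real.log ((ν+1) + m) + ((ν+1) + m) ≤ gg ((ν+1) + m) := by
      rw [hgg]; linarith
    exact le_trans this hchain
  have hlim := le_of_tendsto (B_tendsto (ν+1) hc0) hB
  linarith

end Aux

theorem c0_bounds (ν : ℝ) (hν : 1 ≤ ν)
    (c₀ : ℝ) (hc₀ : c₀ = 2 * (Real.Gamma ν / Real.sqrt π) ^ (2 / (2 * ν - 1))) :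
    (2 * ν / Real.exp 1) * (2 / Real.exp 1) ^ (1 / (2 * ν - 1)) < c₀ ∧
      c₀ < 2 * ν / Real.exp 1 := by
  have hν0 : (0:ℝ) < ν := by linarith
  have hs : (0:ℝ) < 2 * ν - 1 := by linarith
  have hG : 0 < Real.Gamma ν := Real.Gamma_pos_of_pos hν0
  have hsp : 0 < Real.sqrt π := Real.sqrt_pos.mpr Real.pi_pos
  have hApos : 0 < Real.Gamma ν / Real.sqrt π := div_pos hG hsp
  set A : ℝ := Real.Gamma ν / Real.sqrt π with hA
  set p : ℝ := 2 / (2 * ν - 1) with hp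
  have hppos : 0 < p := by positivity
  have hpinv : p * (ν - 1/2) = 1 := by rw [hp]; field_simp
  have hlogA : Real.log A = Real.log (Real.Gamma ν) - Real.log π / 2 := by
    rw [hA, Real.log_div hG.ne' hsp.ne', Real.log_sqrt Real.pi_pos.le]
  have hApow : 0 < A ^ p := Real.rpow_pos_of_pos hApos p
  have hlogApow : Real.log (A ^ p) = p * Real.log A := Real.log_rpow hApos p
  have he : (0:ℝ) < Real.exp 1 := Real.exp_pos 1
  constructor
  · -- lower bound
    have hup := gg_lower hν
    unfold gg at hup
    have hM : (ν - 1/2) * (Real.log ν - 1) + (Real.log 2 - 1)/2 < Real.log A := by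
      rw [hlogA]; nlinarith [hup]
    have hmul : p * ((ν - 1/2) * (Real.log ν - 1) + (Real.log 2 - 1)/2)
        < p * Real.log A := by
      exact mul_lt_mul_of_pos_left hM hppos
    have hq : p * ((Real.log 2 - 1)/2) = (1/(2*ν-1)) * (Real.log 2 - 1) := by
      rw [hp]; field_simp
    have hLHS : (0:ℝ) < (ν / Real.exp 1) * (2 / Real.exp 1) ^ (1/(2*ν-1)) := by
      apply mul_pos (by positivity) (Real.rpow_pos_of_pos (by positivity) _)
    have hlogLHS : Real.log ((ν / Real.exp 1) * (2 / Real.exp 1) ^ (1/(2*ν-1)))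
        = Real.log ν - 1 + (1/(2*ν-1)) * (Real.log 2 - 1) := by
      rw [Real.log_mul (by positivity) (Real.rpow_pos_of_pos (by positivity) _).ne',
        Real.log_rpow (by positivity), Real.log_div (by positivity) he.ne',
        Real.log_div (by norm_num) he.ne', Real.log_exp]
    have key : Real.log ((ν / Real.exp 1) * (2 / Real.exp 1) ^ (1/(2*ν-1)))
        < Real.log (A ^ p) := by
      rw [hlogLHS, hlogApow]
      calc Real.log ν - 1 + (1/(2*ν-1)) * (Real.log 2 - 1)
          = p * ((ν - 1/2) * (Real.log ν - 1) + (Real.log 2 - 1)/2) := by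
            rw [mul_add, hq]
            have : p * ((ν - 1/2) * (Real.log ν - 1)) = (p * (ν - 1/2)) * (Real.log ν - 1) := by ring
            rw [this, hpinv]; ring
        _ < p * Real.log A := hmul
    have := (Real.log_lt_log_iff hLHS hApow).mp key
    rw [hc₀]
    calc (2 * ν / Real.exp 1) * (2 / Real.exp 1) ^ (1/(2*ν-1))
        = 2 * ((ν / Real.exp 1) * (2 / Real.exp 1) ^ (1/(2*ν-1))) := by ring
      _ < 2 * A ^ p := by linarith
  · -- upper bound
    have hup := gg_upper hν
    unfold gg at hup
    have hM : Real.log A < (ν - 1/2) * (Real.log ν - 1) := by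
      rw [hlogA]; nlinarith [hup]
    have hmul := mul_lt_mul_of_pos_left hM hppos
    have hRHS : (0:ℝ) < ν / Real.exp 1 := by positivity
    have key : Real.log (A ^ p) < Real.log (ν / Real.exp 1) := by
      rw [hlogApow, Real.log_div hν0.ne' he.ne', Real.log_exp]
      calc p * Real.log A < p * ((ν - 1/2) * (Real.log ν - 1)) := hmul
        _ = Real.log ν - 1 := by
            have : p * ((ν - 1/2) * (Real.log ν - 1)) = (p * (ν - 1/2)) * (Real.log ν - 1) := by ring
            rw [this, hpinv]; ring
    have := (Real.log_lt_log_iff hApow hRHS).mp key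
    rw [hc₀]
    calc 2 * A ^ p < 2 * (ν / Real.exp 1) := by linarith
      _ = 2 * ν / Real.exp 1 := by ring
end

section
/- Let z > 0 and ν ≥ 0 be real numbers, and set r_μ = K_{μ+1}(z)/K_μ(z) for real μ ≥ 0. For every real ε > −1, if the forward ratio recurrence r_{ν+1} = 1/r_ν + 2(ν+1)/z is evaluated at the perturbed input r_ν·(1 + ε), the resulting relative error satisfies (1/(r_ν·(1+ε)) + 2(ν+1)/z − r_{ν+1}) / r_{ν+1} = (−ε/(1+ε))·K_ν(z)/K_{ν+2}(z). -/
open Real MeasureTheory Set Filter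

lemma quad_le_cosh (t : ℝ) (ht : 0 ≤ t) : 1 + t ^ 2 / 4 ≤ Real.cosh t := by
  rw [Real.cosh_eq]
  have h1 := Real.quadratic_le_exp_of_nonneg ht
  have h2 := Real.add_one_le_exp (-t)
  nlinarith

lemma cosh_le_exp_abs (x : ℝ) : Real.cosh x ≤ Real.exp |x| := by
  rw [← Real.cosh_abs, Real.cosh_eq]
  have h : Real.exp (-|x|) ≤ Real.exp |x| := Real.exp_le_exp.2 ((neg_abs_le _).trans (le_abs_self _))
  linarith

lemma abs_sinh_le_exp_abs (x : ℝ) : |Real.sinh x| ≤ Real.exp |x| := by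
  rw [Real.abs_sinh]
  calc Real.sinh |x| ≤ Real.cosh |x| := (Real.sinh_lt_cosh _).le
    _ ≤ Real.exp |(|x|)| := cosh_le_exp_abs _
    _ = Real.exp |x| := by rw [abs_abs]

/-- master integrability lemma -/
lemma aux_integrable (z a : ℝ) (hz : 0 < z) :
    IntegrableOn (fun t => Real.exp (-z * Real.cosh t) * Real.exp (a * t)) (Set.Ioi 0) := by
  have hg : Integrable (fun t : ℝ =>
      Real.exp (-z) * Real.exp (a ^ 2 / z) * Real.exp (-(z / 4) * (t - 2 * a / z) ^ 2)) :=
    ((integrable_exp_neg_mul_sq (by linarith : (0:ℝ) < z / 4)).comp_sub_right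
      (2 * a / z)).const_mul _
  refine Integrable.mono hg.integrableOn ?_ ?_
  · exact (((Real.continuous_exp.comp (continuous_const.mul Real.continuous_cosh)).mul
      (Real.continuous_exp.comp (continuous_const.mul continuous_id))).aestronglyMeasurable).restrict
  · rw [ae_restrict_iff' measurableSet_Ioi]
    refine ae_of_all _ fun t ht => ?_
    have ht' : (0:ℝ) ≤ t := (le_of_lt ht)
    have h1 : Real.exp (-z * Real.cosh t) * Real.exp (a * t)
        ≤ Real.exp (-z) * Real.exp (a ^ 2 / z) * Real.exp (-(z / 4) * (t - 2 * a / z) ^ 2) := by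
      rw [← Real.exp_add, ← Real.exp_add, ← Real.exp_add]
      apply Real.exp_le_exp.2
      have := quad_le_cosh t ht'
      have hzne : z ≠ 0 := ne_of_gt hz
      have key : -(z / 4) * (t - 2 * a / z) ^ 2 = -(z/4) * t ^ 2 + a * t - a ^ 2 / z := by
        field_simp; ring
      nlinarith [quad_le_cosh t ht']
    have hpos : 0 ≤ Real.exp (-z * Real.cosh t) * Real.exp (a * t) := by positivity
    rw [Real.norm_eq_abs, Real.norm_eq_abs, abs_of_nonneg hpos, abs_of_nonneg (by positivity)]
    exact h1

lemma besselK_integrable (μ z : ℝ) (hz : 0 < z) :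
    IntegrableOn (fun t => Real.exp (-z * Real.cosh t) * Real.cosh (μ * t)) (Set.Ioi 0) := by
  refine Integrable.mono (aux_integrable z |μ| hz) ?_ ?_
  · exact (((Real.continuous_exp.comp (continuous_const.mul Real.continuous_cosh)).mul
      (Real.continuous_cosh.comp (continuous_const.mul continuous_id))).aestronglyMeasurable).restrict
  · rw [ae_restrict_iff' measurableSet_Ioi]
    refine ae_of_all _ fun t ht => ?_
    have ht' : (0:ℝ) ≤ t := le_of_lt ht
    have h2 : Real.cosh (μ * t) ≤ Real.exp (|μ| * t) := by
      have := cosh_le_exp_abs (μ * t)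
      rwa [abs_mul, abs_of_nonneg ht'] at this
    rw [Real.norm_eq_abs, Real.norm_eq_abs, abs_of_nonneg (by positivity),
      abs_of_nonneg (by positivity)]
    exact mul_le_mul_of_nonneg_left h2 (by positivity)

lemma besselK_pos (μ z : ℝ) (hz : 0 < z) : 0 < besselK μ z := by
  rw [besselK]
  rw [setIntegral_pos_iff_support_of_nonneg_ae]
  · rw [show (Function.support fun t => Real.exp (-z * Real.cosh t) * Real.cosh (μ * t)) = Set.univ
      from Set.eq_univ_of_forall fun t => ne_of_gt (by positivity)]
    simp [Real.volume_Ioi]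
  · exact ae_of_all _ fun t => by simp only [Pi.zero_apply]; positivity
  · exact besselK_integrable μ z hz

lemma sinh_integrable (μ z : ℝ) (hz : 0 < z) :
    IntegrableOn (fun t => Real.exp (-z * Real.cosh t) * (Real.sinh t * Real.sinh (μ * t)))
      (Set.Ioi 0) := by
  refine Integrable.mono (aux_integrable z (1 + |μ|) hz) ?_ ?_
  · exact (((Real.continuous_exp.comp (continuous_const.mul Real.continuous_cosh)).mul
      (Real.continuous_sinh.mul
        (Real.continuous_sinh.comp (continuous_const.mul continuous_id)))).aestronglyMeasurable).restrict
  · rw [ae_restrict_iff' measurableSet_Ioi]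
    refine ae_of_all _ fun t ht => ?_
    have ht' : (0:ℝ) ≤ t := le_of_lt ht
    have h1 : |Real.sinh t| ≤ Real.exp t := by
      have := abs_sinh_le_exp_abs t; rwa [abs_of_nonneg ht'] at this
    have h2 : |Real.sinh (μ * t)| ≤ Real.exp (|μ| * t) := by
      have := abs_sinh_le_exp_abs (μ * t)
      rwa [abs_mul, abs_of_nonneg ht'] at this
    calc ‖Real.exp (-z * Real.cosh t) * (Real.sinh t * Real.sinh (μ * t))‖
        = Real.exp (-z * Real.cosh t) * (|Real.sinh t| * |Real.sinh (μ * t)|) := by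
          rw [Real.norm_eq_abs, abs_mul, abs_mul, abs_of_nonneg (Real.exp_pos _).le]
      _ ≤ Real.exp (-z * Real.cosh t) * (Real.exp t * Real.exp (|μ| * t)) := by
          apply mul_le_mul_of_nonneg_left _ (Real.exp_pos _).le
          exact mul_le_mul h1 h2 (abs_nonneg _) (Real.exp_pos _).le
      _ = Real.exp (-z * Real.cosh t) * Real.exp ((1 + |μ|) * t) := by
          rw [← Real.exp_add]; ring_nf
      _ = ‖Real.exp (-z * Real.cosh t) * Real.exp ((1 + |μ|) * t)‖ := by
          rw [Real.norm_eq_abs]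
          exact (abs_of_nonneg (by positivity)).symm

lemma ibp (μ z : ℝ) (hz : 0 < z) :
    μ * besselK μ z =
      z * ∫ t in Set.Ioi (0:ℝ), Real.exp (-z * Real.cosh t) * (Real.sinh t * Real.sinh (μ * t)) := by
  set F : ℝ → ℝ := fun t => Real.exp (-z * Real.cosh t) * Real.sinh (μ * t) with hF
  set F' : ℝ → ℝ := fun t => Real.exp (-z * Real.cosh t) *
      (μ * Real.cosh (μ * t) - z * (Real.sinh t * Real.sinh (μ * t))) with hF'
  have hderiv : ∀ t : ℝ, HasDerivAt F (F' t) t := by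
    intro t
    have h1 : HasDerivAt (fun t : ℝ => Real.exp (-z * Real.cosh t))
        (Real.exp (-z * Real.cosh t) * (-z * Real.sinh t)) t :=
      (((Real.hasDerivAt_cosh t).const_mul (-z)).exp)
    have h2 : HasDerivAt (fun t : ℝ => Real.sinh (μ * t)) (Real.cosh (μ * t) * μ) t := by
      simpa [Function.comp_def] using (Real.hasDerivAt_sinh (μ * t)).comp t ((hasDerivAt_id t).const_mul μ)
    exact (h1.mul h2).congr_deriv (by simp only [hF']; ring)
  have hint : IntegrableOn F' (Set.Ioi 0) := by
    have h1 := (besselK_integrable μ z hz).const_mul μ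
    have h2 := (sinh_integrable μ z hz).const_mul z
    have heq : F' = (fun x => μ * (Real.exp (-z * Real.cosh x) * Real.cosh (μ * x))) -
        fun x => z * (Real.exp (-z * Real.cosh x) * (Real.sinh x * Real.sinh (μ * x))) := by
      funext t; simp only [hF', Pi.sub_apply]; ring
    rw [IntegrableOn, heq]; exact h1.sub h2
  have htend : Tendsto F atTop (nhds 0) := by
    apply squeeze_zero_norm' (a := fun t => Real.exp (-z - z/4 * t^2 + |μ| * t))
    · filter_upwards [eventually_ge_atTop (0:ℝ)] with t ht
      have h2 : |Real.sinh (μ * t)| ≤ Real.exp (|μ| * t) := by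
        have := abs_sinh_le_exp_abs (μ * t)
        rwa [abs_mul, abs_of_nonneg ht] at this
      have h3 : -z * Real.cosh t ≤ -z - z/4 * t^2 := by
        have := quad_le_cosh t ht; nlinarith
      calc ‖F t‖ = Real.exp (-z * Real.cosh t) * |Real.sinh (μ * t)| := by
            rw [hF, Real.norm_eq_abs, abs_mul, abs_of_nonneg (Real.exp_pos _).le]
        _ ≤ Real.exp (-z - z/4 * t^2) * Real.exp (|μ| * t) :=
            mul_le_mul (Real.exp_le_exp.2 h3) h2 (abs_nonneg _) (Real.exp_pos _).le
        _ = Real.exp (-z - z/4 * t^2 + |μ| * t) := by rw [← Real.exp_add]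
    · apply Real.tendsto_exp_atBot.comp
      have h0 : Tendsto (fun t : ℝ => z/4 * t) atTop atTop :=
        Tendsto.const_mul_atTop (by linarith) tendsto_id
      have h2 : Tendsto (fun t : ℝ => |μ| - z/4 * t) atTop atBot :=
        (tendsto_atBot_add_const_left _ |μ| (tendsto_neg_atBot_iff.mpr h0)).congr
          (fun x => by ring)
      have h3 : Tendsto (fun t : ℝ => t * (|μ| - z/4 * t)) atTop atBot :=
        tendsto_id.atTop_mul_atBot₀ h2
      exact (tendsto_atBot_add_const_right _ (-z) h3).congr (fun x => by ring)
  have hcont : ContinuousWithinAt F (Set.Ici 0) 0 :=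
    ((hderiv 0).continuousAt).continuousWithinAt
  have key := integral_Ioi_of_hasDerivAt_of_tendsto hcont (fun x _ => hderiv x) hint htend
  have hF0 : F 0 = 0 := by simp [hF]
  rw [hF0, sub_zero] at key
  have hsplit : ∫ t in Set.Ioi (0:ℝ), F' t =
      μ * besselK μ z -
        z * ∫ t in Set.Ioi (0:ℝ), Real.exp (-z * Real.cosh t) * (Real.sinh t * Real.sinh (μ * t)) := by
    rw [besselK, ← integral_const_mul, ← integral_const_mul,
      ← integral_sub ((besselK_integrable μ z hz).const_mul μ) ((sinh_integrable μ z hz).const_mul z)]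
    congr 1; ext t; simp only [hF']; ring
  rw [key] at hsplit
  linarith

lemma besselK_rec (μ z : ℝ) (hz : 0 < z) :
    besselK (μ + 1) z = besselK (μ - 1) z + 2 * μ / z * besselK μ z := by
  have h1 : besselK (μ + 1) z - besselK (μ - 1) z =
      ∫ t in Set.Ioi (0:ℝ), 2 * (Real.exp (-z * Real.cosh t) * (Real.sinh t * Real.sinh (μ * t))) := by
    rw [besselK, besselK,
      ← integral_sub (besselK_integrable (μ + 1) z hz) (besselK_integrable (μ - 1) z hz)]
    congr 1; ext t
    rw [show (μ + 1) * t = μ * t + t by ring, show (μ - 1) * t = μ * t - t by ring,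
      Real.cosh_add, Real.cosh_sub]
    ring
  rw [integral_const_mul] at h1
  have h2 := ibp μ z hz
  have hzne : z ≠ 0 := ne_of_gt hz
  have h4 : (∫ t in Set.Ioi (0:ℝ), Real.exp (-z * Real.cosh t) * (Real.sinh t * Real.sinh (μ * t)))
      = μ * besselK μ z / z := by
    rw [eq_div_iff hzne]; linear_combination -h2
  rw [h4] at h1
  field_simp at h1 ⊢
  linarith

theorem ratio_recurrence_error (z ν : ℝ) (hz : 0 < z) (hν : 0 ≤ ν)
    (r : ℝ → ℝ) (hr : ∀ μ : ℝ, r μ = besselK (μ + 1) z / besselK μ z) :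
    ∀ ε : ℝ, -1 < ε →
      (1 / (r ν * (1 + ε)) + 2 * (ν + 1) / z - r (ν + 1)) / r (ν + 1) =
        (-ε / (1 + ε)) * (besselK ν z / besselK (ν + 2) z) := by
  intro ε hε
  have hK0 := besselK_pos ν z hz
  have hK1 := besselK_pos (ν + 1) z hz
  have hK2 := besselK_pos (ν + 2) z hz
  have hrec : besselK (ν + 2) z = besselK ν z + 2 * (ν + 1) / z * besselK (ν + 1) z := by
    have h := besselK_rec (ν + 1) z hz
    rw [show ν + 1 + 1 = ν + 2 by ring, show ν + 1 - 1 = ν by ring] at h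
    exact h
  have h1ε : (1:ℝ) + ε ≠ 0 := ne_of_gt (by linarith)
  rw [hr ν, hr (ν + 1), show ν + 1 + 1 = ν + 2 by ring]
  rw [hrec]
  have hzne : z ≠ 0 := ne_of_gt hz
  have hd : besselK ν z + 2 * (ν + 1) / z * besselK (ν + 1) z ≠ 0 := by rw [← hrec]; linarith
  field_simp
  ring
end
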